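/- In a nilpotent differential graded Lie algebra L over a field of characteristic 0, the gauge action preserves the Maurer–Cartan equation: if ω ∈ L^1 satisfies dω + ½[ω,ω] = 0 and g = exp(x) for x ∈ L^0, then g(ω) := g·ω·g⁻¹ − (dg)·g⁻¹ (computed in the universal enveloping algebra of L) again satisfies d(g(ω)) + ½[g(ω),g(ω)] = 0. -/
import Mathlib


open Finset

/-- In a nilpotent differential graded Lie algebra `L` over a field of
characteristic 0, the gauge action preserves the Maurer–Cartan equation.  All computations
take place in the (completed) universal enveloping algebra of `L`, modelled here as a
`ℤ`-graded associative algebra `A` with grading `𝒜`, equipped with a degree `+1`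
differential `d` satisfying `d² = 0` and the graded Leibniz rule; for `ω` of degree 1 one
has `½[ω,ω] = ½(ω·ω + ω·ω) = ω·ω`.  If `ω ∈ L¹ ⊆ 𝒜 1` satisfies the Maurer–Cartan
equation `dω + ½[ω,ω] = 0` and `g = exp(x)` for a nilpotent `x ∈ L⁰ ⊆ 𝒜 0`, then
`g(ω) := g·ω·g⁻¹ − (dg)·g⁻¹` again satisfies the Maurer–Cartan equation. -/
theorem gauge_action_preserves_maurerCartan
    (k : Type) [Field k] [CharZero k]
    (A : Type) [Ring A] [Algebra k A]
    (𝒜 : ℤ → Submodule k A) [GradedAlgebra 𝒜]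
    -- the differential: `k`-linear, degree `+1`, square zero, graded Leibniz rule
    (d : A →ₗ[k] A)
    (hd_deg : ∀ (i : ℤ), ∀ a ∈ 𝒜 i, d a ∈ 𝒜 (i + 1))
    (hd_sq : ∀ a : A, d (d a) = 0)
    (hd_leibniz : ∀ (i : ℤ), ∀ a ∈ 𝒜 i, ∀ b : A,
      d (a * b) = d a * b + ((-1 : k) ^ i) • (a * d b))
    -- the Maurer–Cartan element `ω` of degree 1
    (ω : A) (hω : ω ∈ 𝒜 1)
    (hMC : d ω + (2 : k)⁻¹ • (ω * ω + ω * ω) = 0)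
    -- the gauge element `g = exp x` for a nilpotent `x` of degree 0
    (x : A) (hx : x ∈ 𝒜 0) (n : ℕ) (hxn : x ^ n = 0)
    (g : Aˣ) (hg : (g : A) = ∑ i ∈ Finset.range n, ((Nat.factorial i : k))⁻¹ • x ^ i) :
    d ((g : A) * ω * ((g⁻¹ : Aˣ) : A) - d (g : A) * ((g⁻¹ : Aˣ) : A)) +
      (2 : k)⁻¹ • (((g : A) * ω * ((g⁻¹ : Aˣ) : A) - d (g : A) * ((g⁻¹ : Aˣ) : A)) *
            ((g : A) * ω * ((g⁻¹ : Aˣ) : A) - d (g : A) * ((g⁻¹ : Aˣ) : A)) +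
          ((g : A) * ω * ((g⁻¹ : Aˣ) : A) - d (g : A) * ((g⁻¹ : Aˣ) : A)) *
            ((g : A) * ω * ((g⁻¹ : Aˣ) : A) - d (g : A) * ((g⁻¹ : Aˣ) : A))) = 0 := by
  -- abbreviations
  set u : A := (g : A) with hu
  set v : A := ((g⁻¹ : Aˣ) : A) with hv
  have huv : u * v = 1 := by rw [hu, hv]; exact_mod_cast g.mul_inv
  have hvu : v * u = 1 := by rw [hu, hv]; exact_mod_cast g.inv_mul
  have huv2 : ∀ t : A, u * (v * t) = t := fun t => by rw [← mul_assoc, huv, one_mul]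
  have hvu2 : ∀ t : A, v * (u * t) = t := fun t => by rw [← mul_assoc, hvu, one_mul]
  have half : ∀ y : A, (2 : k)⁻¹ • (y + y) = y := fun y => by
    rw [← two_smul k y, smul_smul, inv_mul_cancel₀ (two_ne_zero), one_smul]
  -- degree facts
  have h1 : (1 : A) ∈ 𝒜 0 := SetLike.one_mem_graded 𝒜
  have hg0 : u ∈ 𝒜 0 := by
    have hsum : (∑ i ∈ Finset.range n, ((Nat.factorial i : k))⁻¹ • x ^ i) ∈ 𝒜 0 := by
      refine Submodule.sum_mem _ fun i _ => Submodule.smul_mem _ _ ?_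
      have := SetLike.pow_mem_graded (A := 𝒜) i hx
      simpa using this
    exact hg.symm ▸ hsum
  -- Leibniz in degree 0 and 1
  have L0 : ∀ a ∈ 𝒜 0, ∀ b : A, d (a * b) = d a * b + a * d b := by
    intro a ha b
    have := hd_leibniz 0 a ha b
    simpa using this
  have L1 : ∀ a ∈ 𝒜 1, ∀ b : A, d (a * b) = d a * b - a * d b := by
    intro a ha b
    have := hd_leibniz 1 a ha b
    rw [this, zpow_one, neg_one_smul]
    abel
  have hd1 : d (1 : A) = 0 := by
    have := L0 1 h1 1
    rw [mul_one, one_mul] at this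
    rw [mul_one] at this
    exact (left_eq_add.mp this)
  -- Maurer-Cartan simplified
  have hMC' : d ω = -(ω * ω) := by
    have := hMC
    rw [half] at this
    exact eq_neg_of_add_eq_zero_left this
  -- derivative of v
  have hdu1 : d u ∈ 𝒜 1 := by simpa using hd_deg 0 u hg0
  have hdv : d v = -(v * (d u * v)) := by
    have h0 : d (u * v) = 0 := by rw [huv, hd1]
    have h1' : d u * v + u * d v = 0 := by rw [← L0 u hg0 v, h0]
    have h2 : u * d v = -(d u * v) := eq_neg_of_add_eq_zero_right h1' 
    calc d v = v * (u * d v) := (hvu2 _).symm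
    _ = v * (-(d u * v)) := by rw [h2]
    _ = -(v * (d u * v)) := by rw [mul_neg]
  -- compute d(u*ω*v)
  have hstep1 : d (u * ω * v) = d u * (ω * v) + u * (d ω * v) - u * (ω * d v) := by
    rw [mul_assoc, L0 u hg0 (ω * v), L1 ω hω v, mul_sub]
    abel
  have hstep2 : d (d u * v) = -(d u * d v) := by
    rw [L1 (d u) hdu1 v, hd_sq, zero_mul, zero_sub]
  -- final computation
  rw [half, map_sub, hstep1, hstep2, hdv, hMC']
  simp only [mul_sub, sub_mul, mul_neg, neg_mul, mul_assoc, huv2, hvu2, neg_neg,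
    sub_neg_eq_add]
  abel
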